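/- Let d ≥ 1, T ≥ 1, and for each t ∈ {1,…,T} let ν^{(t)} ∈ ℝ^d, w_t > 0, and y^{(t)} ∈ Ω := {y ∈ ℝ^d : y_k > 0 ∀k, Σ_k y_k ≤ 1}; set x^{(t)} := y^{(t)}/Σ_k y^{(t)}_k ∈ Δ^d and u^{(t)} := w_t·(ν^{(t)} − ⟨ν^{(t)}, x^{(t)}⟩·1_d), where 1_d is the all-ones vector. Define the lifted regret R̃(T) := max over y* ∈ {y ∈ ℝ^d : y_k ≥ 0, Σ_k y_k ≤ 1} of Σ_{t=1}^T ⟨u^{(t)}, y* − y^{(t)}⟩, and the weighted external regret Reg(T) := max over x* ∈ Δ^d of Σ_{t=1}^T w_t·(⟨ν^{(t)}, x*⟩ − ⟨ν^{(t)}, x^{(t)}⟩). Then R̃(T) = max{0, Reg(T)}; in particular R̃(T) ≥ 0 and R̃(T) ≥ Reg(T). -/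

import Mathlib

/-- the lifted (nonnegative) regret equals the positive part of the
weighted external regret: `R̃(T) = max{0, Reg(T)}`, hence `R̃(T) ≥ 0` and
`R̃(T) ≥ Reg(T)`. -/
theorem lifted_regret_eq_pos_part (d T : ℕ) (hd : 1 ≤ d) (hT : 1 ≤ T)
    (ν : Fin T → Fin d → ℝ) (w : Fin T → ℝ) (hw : ∀ t, 0 < w t)
    (y : Fin T → Fin d → ℝ)
    (hy : ∀ t, (∀ k, 0 < y t k) ∧ (∑ k, y t k) ≤ 1)
    (x : Fin T → Fin d → ℝ)
    (hx : ∀ t k, x t k = y t k / ∑ j, y t j)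
    (u : Fin T → Fin d → ℝ)
    (hu : ∀ t k, u t k = w t * (ν t k - ∑ j, ν t j * x t j))
    (Rlift Reg : ℝ)
    (hRlift : Rlift = sSup ((fun ys : Fin d → ℝ =>
        ∑ t, ∑ k, u t k * (ys k - y t k)) ''
      {ys : Fin d → ℝ | (∀ k, 0 ≤ ys k) ∧ (∑ k, ys k) ≤ 1}))
    (hReg : Reg = sSup ((fun xs : Fin d → ℝ =>
        ∑ t, w t * ((∑ k, ν t k * xs k) - ∑ k, ν t k * x t k)) ''
      {xs : Fin d → ℝ | (∀ k, 0 ≤ xs k) ∧ (∑ k, xs k) = 1})) :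
    Rlift = max 0 Reg ∧ 0 ≤ Rlift ∧ Reg ≤ Rlift := by
  classical
  set c : Fin d → ℝ := fun k => ∑ t, u t k with hc
  set g : (Fin d → ℝ) → ℝ := fun ys => ∑ k, c k * ys k with hg
  set A : Set (Fin d → ℝ) := {ys | (∀ k, 0 ≤ ys k) ∧ (∑ k, ys k) ≤ 1} with hA
  set Δ : Set (Fin d → ℝ) := {xs | (∀ k, 0 ≤ xs k) ∧ (∑ k, xs k) = 1} with hΔ
  have hS : ∀ t, 0 < ∑ j, y t j := fun t =>
    Finset.sum_pos (fun j _ => (hy t).1 j) ⟨⟨0, hd⟩, Finset.mem_univ _⟩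
  -- inner product of u^t with y^t is zero
  have hzero : ∀ t, ∑ k, u t k * y t k = 0 := by
    intro t
    have hcx : (∑ j, ν t j * x t j) = (∑ j, ν t j * y t j) / ∑ j, y t j := by
      rw [Finset.sum_div]
      exact Finset.sum_congr rfl fun j _ => by rw [hx t j, mul_div_assoc]
    have h1 : ∑ k, u t k * y t k
        = w t * ((∑ k, ν t k * y t k) - (∑ j, ν t j * x t j) * ∑ k, y t k) := by
      have e : ∀ k, u t k * y t k
          = w t * (ν t k * y t k) - (w t * ∑ j, ν t j * x t j) * y t k := fun k => by
        rw [hu]; ring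
      simp only [e, Finset.sum_sub_distrib, ← Finset.mul_sum]
      ring
    rw [h1, hcx, div_mul_cancel₀ _ (ne_of_gt (hS t)), sub_self, mul_zero]
  -- the lifted objective equals g
  have hf : ∀ ys : Fin d → ℝ,
      (∑ t, ∑ k, u t k * (ys k - y t k)) = g ys := by
    intro ys
    have : ∀ t, ∑ k, u t k * (ys k - y t k) = ∑ k, u t k * ys k := by
      intro t
      have := hzero t
      simp only [mul_sub, Finset.sum_sub_distrib, this, sub_zero]
    rw [Finset.sum_congr rfl fun t _ => this t, Finset.sum_comm]
    exact Finset.sum_congr rfl fun k _ => by rw [← Finset.sum_mul]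
  -- the regret objective equals g on the simplex
  have hh : ∀ xs : Fin d → ℝ, (∑ k, xs k) = 1 →
      (∑ t, w t * ((∑ k, ν t k * xs k) - ∑ k, ν t k * x t k)) = g xs := by
    intro xs hxs
    have : ∀ t, w t * ((∑ k, ν t k * xs k) - ∑ k, ν t k * x t k)
        = ∑ k, u t k * xs k := by
      intro t
      simp only [hu]
      have : ∑ k, w t * (ν t k - ∑ j, ν t j * x t j) * xs k
          = w t * ((∑ k, ν t k * xs k) - (∑ j, ν t j * x t j) * ∑ k, xs k) := by
        have e : ∀ k, w t * (ν t k - ∑ j, ν t j * x t j) * xs k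
            = w t * (ν t k * xs k) - (w t * ∑ j, ν t j * x t j) * xs k := fun k => by
          ring
        simp only [e, Finset.sum_sub_distrib, ← Finset.mul_sum]
        ring
      rw [this, hxs, mul_one]
    rw [Finset.sum_congr rfl fun t _ => this t, Finset.sum_comm]
    exact Finset.sum_congr rfl fun k _ => by rw [← Finset.sum_mul]
  -- rewrite the sups
  have hRlift' : Rlift = sSup (g '' A) := by
    rw [hRlift]
    congr 1
    exact Set.image_congr fun ys _ => hf ys
  have hReg' : Reg = sSup (g '' Δ) := by
    rw [hReg]
    congr 1
    exact Set.image_congr fun xs hxs => hh xs hxs.2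
  -- boundedness
  have hbddA : BddAbove (g '' A) := by
    refine ⟨∑ k, |c k|, ?_⟩
    rintro z ⟨ys, ⟨hys0, hys1⟩, rfl⟩
    refine Finset.sum_le_sum fun k _ => ?_
    have hle1 : ys k ≤ 1 := le_trans (Finset.single_le_sum
      (fun j _ => hys0 j) (Finset.mem_univ k)) hys1
    calc c k * ys k ≤ |c k| * ys k := mul_le_mul_of_nonneg_right (le_abs_self _) (hys0 k)
      _ ≤ |c k| * 1 := mul_le_mul_of_nonneg_left hle1 (abs_nonneg _)
      _ = |c k| := mul_one _
  have hsub : Δ ⊆ A := fun xs hxs => ⟨hxs.1, le_of_eq hxs.2⟩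
  have hbddΔ : BddAbove (g '' Δ) := hbddA.mono (Set.image_mono hsub)
  -- nonemptiness
  have hdne : (d : ℝ) ≠ 0 := Nat.cast_ne_zero.mpr (by omega)
  have hΔne : ((fun _ => (d : ℝ)⁻¹) : Fin d → ℝ) ∈ Δ := by
    constructor
    · intro k; positivity
    · simp [Finset.sum_const, Finset.card_univ, nsmul_eq_mul, mul_inv_cancel₀ hdne]
  have hΔimne : (g '' Δ).Nonempty := ⟨_, Set.mem_image_of_mem g hΔne⟩
  have h0A : (0 : Fin d → ℝ) ∈ A := ⟨fun k => le_refl 0, by simp⟩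
  have hg0 : g 0 = 0 := by simp [hg]
  -- Reg ≤ Rlift
  have h1 : Reg ≤ Rlift := by
    rw [hRlift', hReg']
    exact csSup_le_csSup hbddA hΔimne (Set.image_mono hsub)
  -- 0 ≤ Rlift
  have h2 : (0 : ℝ) ≤ Rlift := by
    rw [hRlift', ← hg0]
    exact le_csSup hbddA (Set.mem_image_of_mem g h0A)
  -- Rlift ≤ max 0 Reg
  have h3 : Rlift ≤ max 0 Reg := by
    rw [hRlift']
    refine csSup_le ⟨_, Set.mem_image_of_mem g h0A⟩ ?_
    rintro z ⟨ys, ⟨hys0, hys1⟩, rfl⟩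
    set s : ℝ := ∑ k, ys k with hs
    have hs0 : 0 ≤ s := Finset.sum_nonneg fun k _ => hys0 k
    rcases eq_or_lt_of_le hs0 with hse | hsp
    · -- s = 0 ⇒ ys = 0
      have : ∀ k ∈ Finset.univ, ys k = 0 :=
        (Finset.sum_eq_zero_iff_of_nonneg (fun k _ => hys0 k)).mp hse.symm
      have : g ys = 0 := by
        simp only [hg]
        exact Finset.sum_eq_zero fun k hk => by rw [this k hk, mul_zero]
      rw [this]; exact le_max_left _ _
    · set xs : Fin d → ℝ := fun k => ys k / s with hxs
      have hxsΔ : xs ∈ Δ := by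
        constructor
        · intro k; exact div_nonneg (hys0 k) hs0
        · simp only [hxs, ← Finset.sum_div]
          exact div_self (ne_of_gt hsp)
      have hgys : g ys = s * g xs := by
        simp only [hg, hxs, Finset.mul_sum]
        refine Finset.sum_congr rfl fun k _ => ?_
        field_simp
      have hgle : g xs ≤ Reg := by
        rw [hReg']
        exact le_csSup hbddΔ (Set.mem_image_of_mem g hxsΔ)
      rw [hgys]
      rcases le_or_gt 0 (g xs) with hpos | hneg
      · calc s * g xs ≤ 1 * g xs := mul_le_mul_of_nonneg_right hys1 hpos
          _ = g xs := one_mul _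
          _ ≤ Reg := hgle
          _ ≤ max 0 Reg := le_max_right _ _
      · have : s * g xs ≤ 0 := mul_nonpos_of_nonneg_of_nonpos hs0 hneg.le
        exact this.trans (le_max_left _ _)
  exact ⟨le_antisymm h3 (max_le h2 h1), h2, h1⟩
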